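/- Let a < b be reals and α, β ∈ ℝ such that the characteristic equation λ² + αλ + β = 0 has two distinct positive real roots λ₁, λ₂. Then for every ε > 0 and every twice continuously differentiable function y : [a,b] → ℝ satisfying |y''(t) + α y'(t) + β y(t)| ≤ ε for all t ∈ [a,b], there exists a constant K > 0 (depending only on a, b, λ₁, λ₂) and a twice continuously differentiable function u : [a,b] → ℝ with u''(t) + α u'(t) + β u(t) = 0 for all t ∈ [a,b] and |y(t) − u(t)| ≤ K ε for all t ∈ [a,b]. -/

import Mathlib

open Set

theorem stmt_0 (a b α β l1 l2 : ℝ) (hab : a < b)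
    (h1 : 0 < l1) (h2 : 0 < l2) (hne : l1 ≠ l2)
    (hchar : ∀ l : ℝ, l ^ 2 + α * l + β = (l - l1) * (l - l2)) :
    ∃ K > 0, ∀ ε > 0, ∀ y y' y'' : ℝ → ℝ,
      (∀ t ∈ Icc a b, HasDerivAt y (y' t) t) →
      (∀ t ∈ Icc a b, HasDerivAt y' (y'' t) t) →
      ContinuousOn y'' (Icc a b) →
      (∀ t ∈ Icc a b, |y'' t + α * y' t + β * y t| ≤ ε) →
      ∃ u u' u'' : ℝ → ℝ,
        (∀ t ∈ Icc a b, HasDerivAt u (u' t) t) ∧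
        (∀ t ∈ Icc a b, HasDerivAt u' (u'' t) t) ∧
        ContinuousOn u'' (Icc a b) ∧
        (∀ t ∈ Icc a b, u'' t + α * u' t + β * u t = 0) ∧
        (∀ t ∈ Icc a b, |y t - u t| ≤ K * ε) := by
  have hr1 : l1 ^ 2 + α * l1 + β = 0 := by simpa using hchar l1
  have hr2 : l2 ^ 2 + α * l2 + β = 0 := by simpa using hchar l2
  have hd : l1 - l2 ≠ 0 := sub_ne_zero.mpr hne
  have hba : (0:ℝ) < b - a := by linarith
  refine ⟨(b - a) * (Real.exp (l1*(b-a)) + Real.exp (l2*(b-a))) / |l1 - l2|, by positivity, ?_⟩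
  intro ε hε y y' y'' hy hy' hy''c hbound
  set g : ℝ → ℝ := fun t => y'' t + α * y' t + β * y t with hgdef
  have gcont : ContinuousOn g (Icc a b) := by
    have hyc : ContinuousOn y (Icc a b) := fun t ht => (hy t ht).continuousAt.continuousWithinAt
    have hy'c : ContinuousOn y' (Icc a b) := fun t ht => (hy' t ht).continuousAt.continuousWithinAt
    exact (hy''c.add (continuousOn_const.mul hy'c)).add (continuousOn_const.mul hyc)
  set c : ℝ → ℝ := fun t => max a (min b t) with hcdef
  have hc : Continuous c := continuous_const.max (continuous_const.min continuous_id)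
  have hcmem : ∀ t, c t ∈ Icc a b := fun t =>
    ⟨le_max_left _ _, max_le hab.le (min_le_left _ _)⟩
  set G : ℝ → ℝ := fun t => g (c t) with hGdef
  have Gcont : Continuous G := gcont.comp_continuous hc hcmem
  have Geq : ∀ t ∈ Icc a b, G t = g t := by
    intro t ht
    have : c t = t := by
      simp only [hcdef]
      rw [min_eq_right ht.2, max_eq_right ht.1]
    simp [hGdef, this]
  have Gbd : ∀ t, |G t| ≤ ε := fun t => hbound (c t) (hcmem t)
  set f1 : ℝ → ℝ := fun s => Real.exp (-(l1 * s)) * G s with hf1def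
  set f2 : ℝ → ℝ := fun s => Real.exp (-(l2 * s)) * G s with hf2def
  have f1cont : Continuous f1 := ((continuous_const.mul continuous_id).neg.rexp).mul Gcont
  have f2cont : Continuous f2 := ((continuous_const.mul continuous_id).neg.rexp).mul Gcont
  set F1 : ℝ → ℝ := fun t => ∫ s in a..t, f1 s with hF1def
  set F2 : ℝ → ℝ := fun t => ∫ s in a..t, f2 s with hF2def
  have hF1 : ∀ t, HasDerivAt F1 (f1 t) t := fun t =>
    (f1cont.integral_hasStrictDerivAt a t).hasDerivAt
  have hF2 : ∀ t, HasDerivAt F2 (f2 t) t := fun t =>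
    (f2cont.integral_hasStrictDerivAt a t).hasDerivAt
  have he1 : ∀ t, HasDerivAt (fun s => Real.exp (l1 * s)) (l1 * Real.exp (l1 * t)) t := by
    intro t
    have := ((hasDerivAt_id t).const_mul l1).exp
    simpa [mul_comm] using this
  have he2 : ∀ t, HasDerivAt (fun s => Real.exp (l2 * s)) (l2 * Real.exp (l2 * t)) t := by
    intro t
    have := ((hasDerivAt_id t).const_mul l2).exp
    simpa [mul_comm] using this
  have hcancel1 : ∀ t, Real.exp (l1 * t) * f1 t = G t := by
    intro t
    simp only [hf1def, Real.exp_neg]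
    rw [← mul_assoc, mul_inv_cancel₀ (Real.exp_ne_zero _), one_mul]
  have hcancel2 : ∀ t, Real.exp (l2 * t) * f2 t = G t := by
    intro t
    simp only [hf2def, Real.exp_neg]
    rw [← mul_assoc, mul_inv_cancel₀ (Real.exp_ne_zero _), one_mul]
  set w : ℝ → ℝ := fun t => (Real.exp (l1*t) * F1 t - Real.exp (l2*t) * F2 t) / (l1 - l2)
    with hwdef
  set w' : ℝ → ℝ := fun t =>
    (l1 * (Real.exp (l1*t) * F1 t) - l2 * (Real.exp (l2*t) * F2 t)) / (l1 - l2) with hw'def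
  set w'' : ℝ → ℝ := fun t =>
    (l1^2 * Real.exp (l1*t) * F1 t + l1 * G t
      - l2^2 * Real.exp (l2*t) * F2 t - l2 * G t) / (l1 - l2) with hw''def
  have hw : ∀ t, HasDerivAt w (w' t) t := by
    intro t
    have h := (((he1 t).mul (hF1 t)).sub ((he2 t).mul (hF2 t))).div_const (l1 - l2)
    refine h.congr_deriv ?_
    rw [hw'def, hcancel1 t, hcancel2 t]
    ring
  have hw' : ∀ t, HasDerivAt w' (w'' t) t := by
    intro t
    have h := ((((he1 t).mul (hF1 t)).const_mul l1).sub
      (((he2 t).mul (hF2 t)).const_mul l2)).div_const (l1 - l2)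
    refine h.congr_deriv ?_
    rw [hw''def, hcancel1 t, hcancel2 t]
    ring
  have hF1c : Continuous F1 := continuous_iff_continuousAt.mpr fun t => (hF1 t).continuousAt
  have hF2c : Continuous F2 := continuous_iff_continuousAt.mpr fun t => (hF2 t).continuousAt
  have hw''c : Continuous w'' := by
    rw [hw''def]
    apply Continuous.div_const
    fun_prop
  refine ⟨fun t => y t - w t, fun t => y' t - w' t, fun t => y'' t - w'' t,
    fun t ht => (hy t ht).sub (hw t), fun t ht => (hy' t ht).sub (hw' t),
    hy''c.sub hw''c.continuousOn, ?_, ?_⟩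
  · intro t ht
    have key : w'' t + α * w' t + β * w t = G t := by
      rw [hwdef, hw'def, hw''def]
      field_simp
      simp only [mul_comm t l1, mul_comm t l2]
      linear_combination (Real.exp (l1*t) * F1 t) * hr1 - (Real.exp (l2*t) * F2 t) * hr2
    have : y'' t + α * y' t + β * y t = g t := rfl
    rw [Geq t ht] at key
    simp only [hgdef] at key ⊢
    linarith [key]
  · intro t ht
    have hFbd : ∀ (l : ℝ) (F : ℝ → ℝ), 0 < l →
        (F = fun t => ∫ s in a..t, Real.exp (-(l * s)) * G s) →
        |Real.exp (l*t) * F t| ≤ Real.exp (l*(b-a)) * ((b-a) * ε) := by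
      intro l F hl hFdef
      have hta : a ≤ t := ht.1
      have htb : t ≤ b := ht.2
      have hint0 : ‖∫ s in a..t, Real.exp (-(l * s)) * G s‖ ≤ Real.exp (-(l * a)) * ε * |t - a| := by
        apply intervalIntegral.norm_integral_le_of_norm_le_const
        intro x hx
        rw [Set.uIoc_of_le hta] at hx
        have hax : a ≤ x := hx.1.le
        have : Real.exp (-(l * x)) ≤ Real.exp (-(l * a)) :=
          Real.exp_le_exp.mpr (by nlinarith)
        calc ‖Real.exp (-(l * x)) * G x‖ = Real.exp (-(l * x)) * |G x| := by
              rw [Real.norm_eq_abs, abs_mul, abs_of_pos (Real.exp_pos _)]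
          _ ≤ Real.exp (-(l * a)) * ε := by
              apply mul_le_mul this (Gbd x) (abs_nonneg _) (Real.exp_pos _).le
      have hint : |F t| ≤ Real.exp (-(l * a)) * ε * |t - a| := by
        calc |F t| = ‖F t‖ := (Real.norm_eq_abs _).symm
          _ = ‖∫ s in a..t, Real.exp (-(l * s)) * G s‖ := by rw [hFdef]
          _ ≤ _ := hint0
      have h1' : |Real.exp (l*t) * F t| ≤ Real.exp (l*t) * (Real.exp (-(l * a)) * ε * |t - a|) := by
        rw [abs_mul, abs_of_pos (Real.exp_pos _)]
        exact mul_le_mul_of_nonneg_left hint (Real.exp_pos _).le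
      have habs : |t - a| = t - a := abs_of_nonneg (by linarith)
      calc |Real.exp (l*t) * F t| ≤ Real.exp (l*t) * (Real.exp (-(l * a)) * ε * |t - a|) := h1'
        _ = Real.exp (l*t - l*a) * (ε * (t - a)) := by
            rw [habs, Real.exp_sub, Real.exp_neg]; ring
        _ ≤ Real.exp (l*(b-a)) * ((b-a) * ε) := by
            apply mul_le_mul
            · exact Real.exp_le_exp.mpr (by nlinarith)
            · nlinarith
            · nlinarith
            · exact (Real.exp_pos _).le
    have hb1 := hFbd l1 F1 h1 rfl
    have hb2 := hFbd l2 F2 h2 rfl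
    have heq : y t - (y t - w t) = w t := by ring
    rw [heq, hwdef]
    rw [abs_div]
    rw [div_le_iff₀ (by positivity : (0:ℝ) < |l1 - l2|)]
    calc |Real.exp (l1*t) * F1 t - Real.exp (l2*t) * F2 t|
        ≤ |Real.exp (l1*t) * F1 t| + |Real.exp (l2*t) * F2 t| := abs_sub _ _
      _ ≤ Real.exp (l1*(b-a)) * ((b-a) * ε) + Real.exp (l2*(b-a)) * ((b-a) * ε) := by
          linarith
      _ = (b - a) * (Real.exp (l1*(b-a)) + Real.exp (l2*(b-a))) / |l1 - l2| * ε * |l1 - l2| := by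
          field_simp
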